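/- Let L be a Lie algebra over a field of characteristic not equal to 2, and let a, b, c ∈ L satisfy [b,c] = [a,b,a] = [a,b,b] = [a,c,a] = 0 (left-normed brackets), and suppose all brackets of weight 5 in a, b, c vanish (e.g. L is nilpotent of class 4). Then [[a,b],[a,c]] = 0. -/
import Mathlib


theorem bracket_ab_ac_eq_zero
    {K : Type*} [Field K] (hchar : (2 : K) ≠ 0)
    {L : Type*} [LieRing L] [LieAlgebra K L] (a b c : L)
    (hbc : ⁅b, c⁆ = 0) (haba : ⁅⁅a, b⁆, a⁆ = 0) (habb : ⁅⁅a, b⁆, b⁆ = 0)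
    (haca : ⁅⁅a, c⁆, a⁆ = 0)
    (h5 : ∀ v w x y z : L, v ∈ ({a, b, c} : Set L) → w ∈ ({a, b, c} : Set L) →
      x ∈ ({a, b, c} : Set L) → y ∈ ({a, b, c} : Set L) → z ∈ ({a, b, c} : Set L) →
      ⁅⁅⁅⁅v, w⁆, x⁆, y⁆, z⁆ = 0) :
    ⁅⁅a, b⁆, ⁅a, c⁆⁆ = 0 := by
  have e3 : ⁅⁅a, b⁆, c⁆ = ⁅⁅a, c⁆, b⁆ := by
    rw [lie_lie a b c, hbc, lie_zero, zero_sub, lie_skew]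
  have e1 : ⁅⁅a, b⁆, ⁅a, c⁆⁆ = ⁅a, ⁅⁅a, b⁆, c⁆⁆ := by
    rw [leibniz_lie ⁅a, b⁆ a c, haba, zero_lie, zero_add, ← lie_skew a ⁅⁅a,b⁆,c⁆,
      ← lie_skew ⁅⁅a,b⁆,c⁆ a]
  have e2 : ⁅⁅a, c⁆, ⁅a, b⁆⁆ = ⁅a, ⁅⁅a, c⁆, b⁆⁆ := by
    rw [leibniz_lie ⁅a, c⁆ a b, haca, zero_lie, zero_add, ← lie_skew a ⁅⁅a,c⁆,b⁆,
      ← lie_skew ⁅⁅a,c⁆,b⁆ a]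
  have hX : ⁅⁅a, b⁆, ⁅a, c⁆⁆ = -⁅⁅a, b⁆, ⁅a, c⁆⁆ := by
    rw [lie_skew ⁅a,c⁆ ⁅a,b⁆, e1, e2, e3]
  have h2 : (2 : K) • ⁅⁅a, b⁆, ⁅a, c⁆⁆ = 0 := by
    rw [two_smul]
    nth_rewrite 1 [hX]
    simp
  rcases smul_eq_zero.mp h2 with h | h
  · exact absurd h hchar
  · exact h
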